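/- Let $c_{26}, c_{27}, c_{28} > 0$ and $\rho \in (0,1)$ satisfy $(1 + c_{26})c_{27} < 1$ and $\rho + \sqrt{2}\, c_{27} < 1$. Let $\Gamma \subseteq \mathbb{R}^d$ and $w: \Gamma \to \mathbb{R}^d$ satisfy: (ii) $|w(x) - w(y)| \le c_{27}|x-y|$ for all $x,y \in \Gamma$; (iii) $c_{28} \le |w(x)| \le \rho$ for all $x \in \Gamma$; (iv) $|w(y)_{\perp(y-x)}| \ge |w(y)|/c_{26}$ whenever $0 < |x-y| \le 2\rho$. Define $f: \Gamma \times [0,1] \to \mathbb{R}^d$ by $f(x,t) = x + t w(x)$. Then there exists a constant $c_{29} > 0$ (depending only on $\rho, c_{26}, c_{27}, c_{28}$) such that $|f(x,t) - f(y,s)| \ge c_{29}(|x-y| + |t-s|)$ for all $x, y \in \Gamma$ and $t, s \in [0,1]$; in particular $f$ is injective and its inverse is Lipschitz continuous. -/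

import Mathlib

open scoped InnerProductSpace
noncomputable section

/-- The component of `v` orthogonal to `z`: `v_{⊥z} = v - v_{∥z}`, where `v_{∥z}`
is the orthogonal projection of `v` onto the line `zℝ`. -/
def perp {d : ℕ} (z v : EuclideanSpace ℝ (Fin d)) : EuclideanSpace ℝ (Fin d) :=
  v - (⟪v, z⟫_ℝ / ⟪z, z⟫_ℝ) • z

lemma perp_neg {d : ℕ} (z v : EuclideanSpace ℝ (Fin d)) : perp (-z) v = perp z v := by
  simp [perp, inner_neg_right, inner_neg_left, neg_div, smul_neg, neg_neg]

lemma inner_perp_self {d : ℕ} {z : EuclideanSpace ℝ (Fin d)} (hz : z ≠ 0)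
    (v : EuclideanSpace ℝ (Fin d)) : ⟪perp z v, z⟫_ℝ = 0 := by
  have h : ⟪z, z⟫_ℝ ≠ 0 := inner_self_ne_zero.mpr hz
  simp only [perp, inner_sub_left, real_inner_smul_left, div_mul_cancel₀ _ h, sub_self]

lemma norm_perp_le {d : ℕ} (z v : EuclideanSpace ℝ (Fin d)) : ‖perp z v‖ ≤ ‖v‖ := by
  by_cases hz : z = 0
  · simp [perp, hz]
  · have hv : v = perp z v + (⟪v, z⟫_ℝ / ⟪z, z⟫_ℝ) • z := by simp [perp]
    have horth : ⟪perp z v, (⟪v, z⟫_ℝ / ⟪z, z⟫_ℝ) • z⟫_ℝ = 0 := by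
      rw [real_inner_smul_right, inner_perp_self hz, mul_zero]
    have h := norm_add_sq_real (perp z v) ((⟪v, z⟫_ℝ / ⟪z, z⟫_ℝ) • z)
    rw [horth, ← hv] at h
    nlinarith [norm_nonneg (perp z v), norm_nonneg v,
      norm_nonneg ((⟪v, z⟫_ℝ / ⟪z, z⟫_ℝ) • z)]

lemma perp_add {d : ℕ} (z v w : EuclideanSpace ℝ (Fin d)) :
    perp z (v + w) = perp z v + perp z w := by
  simp only [perp, inner_add_left, add_div, add_smul]
  abel

lemma perp_smul {d : ℕ} (z v : EuclideanSpace ℝ (Fin d)) (c : ℝ) :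
    perp z (c • v) = c • perp z v := by
  simp only [perp, real_inner_smul_left, mul_div_assoc, mul_smul, smul_sub]

lemma perp_self {d : ℕ} {z : EuclideanSpace ℝ (Fin d)} (hz : z ≠ 0) : perp z z = 0 := by
  have h : ⟪z, z⟫_ℝ ≠ 0 := inner_self_ne_zero.mpr hz
  rw [perp, div_self h, one_smul, sub_self]

/-! Arithmetic auxiliary lemmas (kept at top level so each `nlinarith` call has a
small context). -/

lemma aux_pos {a b c : ℝ} (ha : 0 < a) (hc : 0 < c) (h : a ≤ b * c) : 0 < b := by
  nlinarith

lemma aux_tmul {t X C : ℝ} (ht0 : 0 ≤ t) (ht1 : t ≤ 1) (hX0 : 0 ≤ X) (hXC : X ≤ C) :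
    t * X ≤ C := by nlinarith

lemma aux_tmul_lower {t I c : ℝ} (ht0 : 0 ≤ t) (ht1 : t ≤ 1) (habs : |I| ≤ c) :
    -c ≤ t * I := by
  rcases le_or_gt 0 I with h | h
  · have h1 : 0 ≤ t * I := mul_nonneg ht0 h
    have h2 : 0 ≤ c := le_trans (abs_nonneg I) habs
    linarith
  · have h1 : -I ≤ c := by rw [abs_of_neg h] at habs; linarith
    have h2 : I ≤ t * I := by
      nlinarith [mul_nonneg (by linarith : (0:ℝ) ≤ 1 - t) (by linarith : (0:ℝ) ≤ -I)]
    linarith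

lemma aux_A {c27 δ τ p P N IDu Iab Ibu t s : ℝ} (hδ : 0 < δ)
    (hIDu : IDu ≤ N * δ) (hinner : IDu = δ ^ 2 + t * Iab + (t - s) * Ibu)
    (h2 : -(c27 * δ * δ) ≤ t * Iab) (h3 : -(τ * P) ≤ (t - s) * Ibu) (hpP : p * δ = P) :
    (1 - c27) * δ - τ * p ≤ N := by
  have hτP : τ * (p * δ) = τ * P := by rw [hpP]
  have h : ((1 - c27) * δ - τ * p) * δ ≤ N * δ := by nlinarith
  exact le_of_mul_le_mul_right h hδ

lemma aux_comb {c26 c27 M δ τ p q N : ℝ} (hM : 0 < M) (hc27 : 0 < c27)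
    (hMid : M * (1 + c26) = 1 - (1 + c26) * c27) (hδ : 0 < δ) (hτ0 : 0 ≤ τ)
    (hp0 : 0 ≤ p) (hq0 : 0 < q) (hpq : p ≤ c26 * q)
    (hA : (1 - c27) * δ - τ * p ≤ N) (hB : τ * q - c27 * δ ≤ N) : M * δ ≤ N := by
  have hMidq : M * (1 + c26) * q = (1 - (1 + c26) * c27) * q := by rw [hMid]
  have hstep : M * (p + q) ≤ (1 - c27) * q - c27 * p := by
    nlinarith [mul_le_mul_of_nonneg_left hpq hM.le, mul_le_mul_of_nonneg_left hpq hc27.le]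
  have hsum : ((1 - c27) * q - c27 * p) * δ ≤ (p + q) * N := by
    nlinarith [mul_le_mul_of_nonneg_left hA hq0.le, mul_le_mul_of_nonneg_left hB hp0]
  have hfin : M * δ * (p + q) ≤ N * (p + q) := by
    nlinarith [mul_le_mul_of_nonneg_right hstep hδ.le]
  exact le_of_mul_le_mul_right hfin (by linarith)

lemma aux_near_concl {c26 c27 c28 M K cN1 cN2 c29 δ τ q N : ℝ}
    (hc26 : 0 < c26) (hc28 : 0 < c28) (hc27 : 0 < c27)
    (hδ : 0 < δ) (hτ0 : 0 ≤ τ) (hqc : c28 ≤ q * c26)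
    (hK : 1 ≤ K) (hKid : (K - 1) * c28 = 2 * c26 * c27)
    (hcN1 : 0 < cN1) (hcN1id : cN1 * (1 + K) = M) (hcN2 : 0 < cN2)
    (hcN2id : cN2 * (4 * c26) = c28)
    (h29b : c29 ≤ cN1) (h29c : c29 ≤ cN2)
    (hMδ : M * δ ≤ N) (hB : τ * q - c27 * δ ≤ N) : c29 * (δ + τ) ≤ N := by
  rcases le_or_gt τ (K * δ) with h | h
  · have h1 : c29 * (δ + τ) ≤ cN1 * (δ + τ) :=
      mul_le_mul_of_nonneg_right h29b (by linarith)
    have h2 : cN1 * (δ + τ) ≤ cN1 * ((1 + K) * δ) :=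
      mul_le_mul_of_nonneg_left (by nlinarith) hcN1.le
    nlinarith
  · have hδτ : δ ≤ τ := by nlinarith
    have hKidδ : (K - 1) * c28 * δ = 2 * c26 * c27 * δ := by rw [hKid]
    have h2' : c27 * δ * (2 * c26) ≤ τ * c28 := by
      nlinarith [mul_le_mul_of_nonneg_right h.le hc28.le, mul_pos hδ hc28]
    have hx1 : c28 * τ ≤ 2 * c26 * N := by
      nlinarith [mul_le_mul_of_nonneg_left hB (by linarith : (0:ℝ) ≤ 2 * c26),
        mul_le_mul_of_nonneg_left hqc hτ0]
    have hs1 : c29 * (δ + τ) ≤ cN2 * (2 * τ) := by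
      nlinarith [mul_le_mul_of_nonneg_right h29c (by linarith : (0:ℝ) ≤ δ + τ),
        mul_le_mul_of_nonneg_left hδτ hcN2.le]
    have hs2 : cN2 * (2 * τ) * (2 * c26) = c28 * τ := by
      have e : cN2 * (2 * τ) * (2 * c26) = cN2 * (4 * c26) * τ := by ring
      rw [e, hcN2id]
    have hfin : c29 * (δ + τ) * (2 * c26) ≤ N * (2 * c26) := by
      nlinarith [mul_le_mul_of_nonneg_right hs1 (by linarith : (0:ℝ) ≤ 2 * c26)]
    exact le_of_mul_le_mul_right hfin (by linarith)

lemma aux_far {ρ c27 mc cF c29 δ τ m N : ℝ}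
    (hρ0 : 0 < ρ) (hc27 : 0 < c27) (hc27' : c27 < 1)
    (hm0 : 0 ≤ m) (hτ0 : 0 ≤ τ) (hmτ : m + τ ≤ 1)
    (hfar : 2 * ρ < δ)
    (hmc1 : mc ≤ 1 - c27) (hmc2 : mc ≤ 1 / 2) (hmc : 0 < mc)
    (hcFid : cF * (2 * ρ + 1) = mc * (2 * ρ)) (hcF : 0 < cF) (h29d : c29 ≤ cF)
    (hDlow : δ - (τ * ρ + m * (c27 * δ)) ≤ N) : c29 * (δ + τ) ≤ N := by
  have hδ : 0 < δ := by linarith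
  have hkey : mc ≤ 1 - m * c27 - τ / 2 := by
    rcases le_or_gt c27 (1 / 2) with hc | hc
    · nlinarith [mul_le_mul_of_nonneg_left hc hm0]
    · nlinarith [mul_nonneg hτ0 (by linarith : (0:ℝ) ≤ c27 - 1 / 2),
        mul_nonneg (by linarith : (0:ℝ) ≤ 1 - (m + τ)) hc27.le]
  have hDlow2 : mc * δ ≤ N := by
    nlinarith [mul_le_mul_of_nonneg_right hkey hδ.le,
      mul_le_mul_of_nonneg_left (by linarith : ρ ≤ δ / 2) hτ0]
  have h1 : c29 * (δ + τ) ≤ cF * (δ + 1) := by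
    have h0 := mul_le_mul_of_nonneg_right h29d (by linarith : (0:ℝ) ≤ δ + τ)
    nlinarith [mul_le_mul_of_nonneg_left (by linarith : τ ≤ 1) hcF.le]
  have h2 : cF * (δ + 1) * (2 * ρ + 1) ≤ mc * δ * (2 * ρ + 1) := by
    have hcFid2 : cF * (2 * ρ + 1) * (δ + 1) = mc * (2 * ρ) * (δ + 1) := by rw [hcFid]
    nlinarith [mul_le_mul_of_nonneg_left (le_of_lt hfar) hmc.le]
  have h2' : cF * (δ + 1) ≤ mc * δ := le_of_mul_le_mul_right h2 (by linarith)
  linarith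

lemma aux_zero {c28 c29 τ B : ℝ} (h29 : c29 ≤ c28) (h29p : 0 < c29) (hτ0 : 0 ≤ τ)
    (hc28B : c28 ≤ B) (hc28 : 0 < c28) : c29 * (0 + τ) ≤ τ * B := by
  nlinarith

set_option maxHeartbeats 1000000 in
/-- reverse Lipschitz bound for the tube map `f(x,t) = x + t w(x)`. -/
theorem stmt5 (ρ c26 c27 c28 : ℝ)
    (hρ : ρ ∈ Set.Ioo (0 : ℝ) 1) (hc26 : 0 < c26) (hc27 : 0 < c27) (hc28 : 0 < c28)
    (hlip : (1 + c26) * c27 < 1) (hsum : ρ + Real.sqrt 2 * c27 < 1) :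
    ∃ c29 > 0, ∀ (d : ℕ) (Γ : Set (EuclideanSpace ℝ (Fin d)))
      (w : EuclideanSpace ℝ (Fin d) → EuclideanSpace ℝ (Fin d)),
      (∀ x ∈ Γ, ∀ y ∈ Γ, ‖w x - w y‖ ≤ c27 * ‖x - y‖) →
      (∀ x ∈ Γ, c28 ≤ ‖w x‖ ∧ ‖w x‖ ≤ ρ) →
      (∀ x ∈ Γ, ∀ y ∈ Γ, 0 < ‖x - y‖ → ‖x - y‖ ≤ 2 * ρ →
        ‖w y‖ / c26 ≤ ‖perp (y - x) (w y)‖) →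
      ∀ x ∈ Γ, ∀ y ∈ Γ, ∀ t ∈ Set.Icc (0 : ℝ) 1, ∀ s ∈ Set.Icc (0 : ℝ) 1,
        c29 * (‖x - y‖ + |t - s|) ≤ ‖(x + t • w x) - (y + s • w y)‖ ∧
        (x + t • w x = y + s • w y → x = y ∧ t = s) := by
  obtain ⟨hρ0, hρ1⟩ := hρ
  have hc27' : c27 < 1 := by nlinarith
  -- constants
  obtain ⟨M, hMdef⟩ : ∃ M : ℝ, M = (1 - (1 + c26) * c27) / (1 + c26) := ⟨_, rfl⟩
  have hM : 0 < M := by rw [hMdef]; exact div_pos (by linarith) (by linarith)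
  have hMid : M * (1 + c26) = 1 - (1 + c26) * c27 := by
    rw [hMdef]; exact div_mul_cancel₀ _ (by linarith)
  obtain ⟨K, hKdef⟩ : ∃ K : ℝ, K = 1 + 2 * c26 * c27 / c28 := ⟨_, rfl⟩
  have hK : 1 ≤ K := by
    rw [hKdef]
    have : 0 ≤ 2 * c26 * c27 / c28 := by positivity
    linarith
  have hKid : (K - 1) * c28 = 2 * c26 * c27 := by
    rw [hKdef]; field_simp; ring
  obtain ⟨cN1, hcN1def⟩ : ∃ cN1 : ℝ, cN1 = M / (1 + K) := ⟨_, rfl⟩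
  have hcN1 : 0 < cN1 := by rw [hcN1def]; exact div_pos hM (by linarith)
  have hcN1id : cN1 * (1 + K) = M := by
    rw [hcN1def]; exact div_mul_cancel₀ _ (by linarith)
  obtain ⟨cN2, hcN2def⟩ : ∃ cN2 : ℝ, cN2 = c28 / (4 * c26) := ⟨_, rfl⟩
  have hcN2 : 0 < cN2 := by rw [hcN2def]; positivity
  have hcN2id : cN2 * (4 * c26) = c28 := by
    rw [hcN2def]; exact div_mul_cancel₀ _ (by positivity)
  obtain ⟨mc, hmcdef⟩ : ∃ mc : ℝ, mc = min (1 - c27) (1 / 2 : ℝ) := ⟨_, rfl⟩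
  have hmc : 0 < mc := by rw [hmcdef]; exact lt_min (by linarith) (by norm_num)
  have hmc1 : mc ≤ 1 - c27 := by rw [hmcdef]; exact min_le_left _ _
  have hmc2 : mc ≤ 1 / 2 := by rw [hmcdef]; exact min_le_right _ _
  obtain ⟨cF, hcFdef⟩ : ∃ cF : ℝ, cF = mc * (2 * ρ) / (2 * ρ + 1) := ⟨_, rfl⟩
  have hcF : 0 < cF := by rw [hcFdef]; exact div_pos (by positivity) (by linarith)
  have hcFid : cF * (2 * ρ + 1) = mc * (2 * ρ) := by
    rw [hcFdef]; exact div_mul_cancel₀ _ (by linarith)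
  obtain ⟨c29, hc29def⟩ : ∃ c29 : ℝ, c29 = min c28 (min (min cN1 cN2) cF) := ⟨_, rfl⟩
  have hc29 : 0 < c29 := by
    rw [hc29def]; exact lt_min hc28 (lt_min (lt_min hcN1 hcN2) hcF)
  have hc29a : c29 ≤ c28 := by rw [hc29def]; exact min_le_left _ _
  have hc29b : c29 ≤ cN1 := by
    rw [hc29def]
    exact le_trans (min_le_right _ _) (le_trans (min_le_left _ _) (min_le_left _ _))
  have hc29c : c29 ≤ cN2 := by
    rw [hc29def]
    exact le_trans (min_le_right _ _) (le_trans (min_le_left _ _) (min_le_right _ _))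
  have hc29d : c29 ≤ cF := by
    rw [hc29def]; exact le_trans (min_le_right _ _) (min_le_right _ _)
  refine ⟨c29, hc29, ?_⟩
  intro d Γ w hw2 hw3 hw4 x hx y hy t ht s hs
  obtain ⟨ht0, ht1⟩ := ht
  obtain ⟨hs0, hs1⟩ := hs
  have hτ0 : (0:ℝ) ≤ |t - s| := abs_nonneg _
  obtain ⟨a, ha⟩ : ∃ a, w x = a := ⟨_, rfl⟩
  obtain ⟨b, hb⟩ : ∃ b, w y = b := ⟨_, rfl⟩
  obtain ⟨D, hD⟩ : ∃ D, x + t • w x - (y + s • w y) = D := ⟨_, rfl⟩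
  obtain ⟨u, hu⟩ : ∃ u, x - y = u := ⟨_, rfl⟩
  have hDd : D = u + (t • a - s • b) := by rw [← hD, ← hu, ← ha, ← hb]; abel
  have hbn : c28 ≤ ‖b‖ ∧ ‖b‖ ≤ ρ := by rw [← hb]; exact hw3 y hy
  have han : c28 ≤ ‖a‖ ∧ ‖a‖ ≤ ρ := by rw [← ha]; exact hw3 x hx
  have hab : ‖a - b‖ ≤ c27 * ‖u‖ := by rw [← ha, ← hb, ← hu]; exact hw2 x hx y hy
  have hun : (0:ℝ) ≤ ‖u‖ := norm_nonneg u
  have main : c29 * (‖u‖ + |t - s|) ≤ ‖D‖ := by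
    by_cases hxy : x = y
    · have hu0 : ‖u‖ = 0 := by rw [← hu, hxy, sub_self, norm_zero]
      have hab0 : a = b := by
        have h1 := hab
        rw [hu0, mul_zero] at h1
        exact sub_eq_zero.mp (norm_le_zero_iff.mp h1)
      have hu0' : u = 0 := norm_eq_zero.mp hu0
      have hDeq : D = (t - s) • b := by rw [hDd, hab0, hu0', sub_smul]; abel
      have hDn : ‖D‖ = |t - s| * ‖b‖ := by rw [hDeq, norm_smul, Real.norm_eq_abs]
      rw [hu0, hDn]
      exact aux_zero hc29a hc29 hτ0 hbn.1 hc28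
    · have hune : u ≠ 0 := by rw [← hu]; exact sub_ne_zero.mpr hxy
      have hδ : 0 < ‖u‖ := norm_pos_iff.mpr hune
      have hδxy : 0 < ‖x - y‖ := by rw [hu]; exact hδ
      rcases le_or_gt ‖u‖ (2 * ρ) with hnear | hfar
      · -- near case
        have hq' : ‖b‖ / c26 ≤ ‖perp u b‖ := by
          have hnear' : ‖x - y‖ ≤ 2 * ρ := by rw [hu]; exact hnear
          have h4 := hw4 x hx y hy hδxy hnear'
          have hyx : y - x = -u := by rw [← hu]; exact (neg_sub x y).symm
          rwa [hyx, perp_neg, hb] at h4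
        have hbq : ‖b‖ ≤ ‖perp u b‖ * c26 := (div_le_iff₀ hc26).mp hq'
        have hqc : c28 ≤ ‖perp u b‖ * c26 := le_trans hbn.1 hbq
        have hq0 : 0 < ‖perp u b‖ := aux_pos hc28 hc26 hqc
        have hp0 : (0:ℝ) ≤ |⟪b, u⟫_ℝ| / ‖u‖ := div_nonneg (abs_nonneg _) hun
        have hpP : |⟪b, u⟫_ℝ| / ‖u‖ * ‖u‖ = |⟪b, u⟫_ℝ| := div_mul_cancel₀ _ hδ.ne'
        have hP : |⟪b, u⟫_ℝ| ≤ ‖b‖ * ‖u‖ := abs_real_inner_le_norm b u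
        have hpq : |⟪b, u⟫_ℝ| / ‖u‖ ≤ c26 * ‖perp u b‖ := by
          rw [div_le_iff₀ hδ]
          calc |⟪b, u⟫_ℝ| ≤ ‖b‖ * ‖u‖ := hP
            _ ≤ (c26 * ‖perp u b‖) * ‖u‖ :=
              mul_le_mul_of_nonneg_right (by linarith) hun
        -- A bound
        have hinner : ⟪D, u⟫_ℝ = ‖u‖ ^ 2 + t * ⟪a - b, u⟫_ℝ + (t - s) * ⟪b, u⟫_ℝ := by
          rw [hDd, inner_add_left, inner_sub_left, real_inner_smul_left,
            real_inner_smul_left, inner_sub_left, real_inner_self_eq_norm_sq]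
          ring
        have habu : |⟪a - b, u⟫_ℝ| ≤ c27 * ‖u‖ * ‖u‖ := by
          calc |⟪a - b, u⟫_ℝ| ≤ ‖a - b‖ * ‖u‖ := abs_real_inner_le_norm _ _
            _ ≤ c27 * ‖u‖ * ‖u‖ := mul_le_mul_of_nonneg_right hab hun
        have hA : (1 - c27) * ‖u‖ - |t - s| * (|⟪b, u⟫_ℝ| / ‖u‖) ≤ ‖D‖ := by
          have h1 : ⟪D, u⟫_ℝ ≤ ‖D‖ * ‖u‖ := real_inner_le_norm D u
          have h2 : -(c27 * ‖u‖ * ‖u‖) ≤ t * ⟪a - b, u⟫_ℝ := aux_tmul_lower ht0 ht1 habu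
          have h3 : -(|t - s| * |⟪b, u⟫_ℝ|) ≤ (t - s) * ⟪b, u⟫_ℝ := by
            have h4 := neg_abs_le ((t - s) * ⟪b, u⟫_ℝ)
            rwa [abs_mul] at h4
          exact aux_A hδ h1 hinner h2 h3 hpP
        -- B bound
        have hperpD : perp u D = t • perp u (a - b) + (t - s) • perp u b := by
          have hD2 : D = u + (t • (a - b) + (t - s) • b) := by
            rw [hDd, smul_sub, sub_smul]; abel
          rw [hD2, perp_add, perp_add, perp_smul, perp_smul, perp_self hune, zero_add]
        have hB : |t - s| * ‖perp u b‖ - c27 * ‖u‖ ≤ ‖D‖ := by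
          have h1 : ‖perp u D‖ ≤ ‖D‖ := norm_perp_le u D
          have h2 : ‖(t - s) • perp u b‖ ≤ ‖perp u D‖ + ‖t • perp u (a - b)‖ := by
            have he : (t - s) • perp u b = perp u D - t • perp u (a - b) := by
              rw [hperpD]; abel
            rw [he]
            exact norm_sub_le _ _
          have h3 : ‖(t - s) • perp u b‖ = |t - s| * ‖perp u b‖ := by
            rw [norm_smul, Real.norm_eq_abs]
          have h4 : ‖t • perp u (a - b)‖ ≤ c27 * ‖u‖ := by
            rw [norm_smul, Real.norm_eq_abs, abs_of_nonneg ht0]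
            exact aux_tmul ht0 ht1 (norm_nonneg _)
              (le_trans (norm_perp_le u (a - b)) hab)
          linarith
        have hMδ : M * ‖u‖ ≤ ‖D‖ := aux_comb hM hc27 hMid hδ hτ0 hp0 hq0 hpq hA hB
        exact aux_near_concl hc26 hc28 hc27 hδ hτ0 hqc hK hKid hcN1 hcN1id hcN2
          hcN2id hc29b hc29c hMδ hB
      · -- far case
        have hm0 : (0:ℝ) ≤ min t s := le_min ht0 hs0
        have hmτ : min t s + |t - s| ≤ 1 := by
          have h1 := max_sub_min_eq_abs t s
          have h1' : |t - s| = |s - t| := abs_sub_comm t s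
          have h2 := max_le ht1 hs1
          linarith
        have hsb : ‖t • a - s • b‖ ≤ |t - s| * ρ + min t s * (c27 * ‖u‖) := by
          rcases le_total t s with hts | hst
          · have he : t • a - s • b = (t - s) • b + t • (a - b) := by
              rw [sub_smul, smul_sub]; abel
            rw [he, min_eq_left hts]
            have h1 : ‖(t - s) • b + t • (a - b)‖ ≤ ‖(t - s) • b‖ + ‖t • (a - b)‖ :=
              norm_add_le _ _
            have h2 : ‖(t - s) • b‖ = |t - s| * ‖b‖ := by
              rw [norm_smul, Real.norm_eq_abs]
            have h3 : |t - s| * ‖b‖ ≤ |t - s| * ρ :=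
              mul_le_mul_of_nonneg_left hbn.2 hτ0
            have h4 : ‖t • (a - b)‖ ≤ t * (c27 * ‖u‖) := by
              rw [norm_smul, Real.norm_eq_abs, abs_of_nonneg ht0]
              exact mul_le_mul_of_nonneg_left hab ht0
            linarith
          · have he : t • a - s • b = (t - s) • a + s • (a - b) := by
              rw [sub_smul, smul_sub]; abel
            rw [he, min_eq_right hst]
            have h1 : ‖(t - s) • a + s • (a - b)‖ ≤ ‖(t - s) • a‖ + ‖s • (a - b)‖ :=
              norm_add_le _ _
            have h2 : ‖(t - s) • a‖ = |t - s| * ‖a‖ := by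
              rw [norm_smul, Real.norm_eq_abs]
            have h3 : |t - s| * ‖a‖ ≤ |t - s| * ρ :=
              mul_le_mul_of_nonneg_left han.2 hτ0
            have h4 : ‖s • (a - b)‖ ≤ s * (c27 * ‖u‖) := by
              rw [norm_smul, Real.norm_eq_abs, abs_of_nonneg hs0]
              exact mul_le_mul_of_nonneg_left hab hs0
            linarith
        have hDlow : ‖u‖ - (|t - s| * ρ + min t s * (c27 * ‖u‖)) ≤ ‖D‖ := by
          have he : u = D - (t • a - s • b) := by rw [hDd]; abel
          have h1 : ‖u‖ ≤ ‖D‖ + ‖t • a - s • b‖ := by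
            calc ‖u‖ = ‖D - (t • a - s • b)‖ := by rw [← he]
              _ ≤ ‖D‖ + ‖t • a - s • b‖ := norm_sub_le _ _
          linarith
        exact aux_far hρ0 hc27 hc27' hm0 hτ0 hmτ hfar hmc1 hmc2 hmc hcFid hcF hc29d hDlow
  constructor
  · rw [← hu, ← hD] at main
    exact main
  · intro he
    have hD0 : ‖D‖ = 0 := by rw [← hD, he, sub_self, norm_zero]
    have h1 : c29 * (‖u‖ + |t - s|) ≤ 0 := by rw [← hD0]; exact main
    have hu0 : ‖u‖ = 0 := by nlinarith [abs_nonneg (t - s)]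
    have hτz : |t - s| = 0 := by nlinarith
    constructor
    · have : u = 0 := norm_eq_zero.mp hu0
      rw [← hu] at this
      exact sub_eq_zero.mp this
    · have := abs_eq_zero.mp hτz
      linarith
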